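/- Let $\alpha \in \mathbb{C}$, $a, x > 0$, $b \in \mathbb{C}$, and $c > \max\{(1-\mathrm{Re}(b))/a, (1-\mathrm{Re}(b-\alpha))/a, 0\}$. Then $\frac{1}{2\pi i}\int_{c-i\infty}^{c+i\infty} \Gamma(s)\,\zeta(as+b)\,\zeta(as+b-\alpha)\, x^{-s}\, ds = \sum_{n=1}^{\infty} \frac{\sigma_\alpha(n)}{n^b} e^{-n^a x}$. -/

import Mathlib

open Complex Real Filter MeasureTheory

/-- The generalized divisor function `σ_α(n) = ∑_{d ∣ n} d^α` for complex `α`. -/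
noncomputable def sigmaC (α : ℂ) (n : ℕ) : ℂ := ∑ d ∈ n.divisors, (d : ℂ) ^ α

lemma hasSum_sigmaC {α w : ℂ} (hw : 1 < w.re) (hwa : 1 < (w - α).re) :
    HasSum (fun n : ℕ ↦ sigmaC α (n + 1) / ((n + 1 : ℕ) : ℂ) ^ w)
      (riemannZeta w * riemannZeta (w - α)) := by
  set g : ℕ → ℂ := fun n ↦ if n = 0 then 0 else (n : ℂ) ^ α with hg
  have h1 : LSeriesHasSum (fun n ↦ ((ArithmeticFunction.zeta n : ℕ) : ℂ)) w (riemannZeta w) :=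
    ArithmeticFunction.LSeriesHasSum_zeta hw
  have h2 : LSeriesHasSum g w (riemannZeta (w - α)) := by
    have h := ArithmeticFunction.LSeriesHasSum_zeta hwa
    have he : ∀ n, LSeries.term (fun n ↦ ((ArithmeticFunction.zeta n : ℕ) : ℂ)) (w - α) n
        = LSeries.term g w n := by
      intro n
      rcases eq_or_ne n 0 with rfl | hn
      · simp [LSeries.term]
      · have hn0 : (n : ℂ) ≠ 0 := Nat.cast_ne_zero.mpr hn
        rw [LSeries.term_of_ne_zero hn, LSeries.term_of_ne_zero hn]
        simp only [hg, hn, if_neg, ArithmeticFunction.zeta_apply, if_false]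
        push_cast
        rw [Complex.cpow_sub _ _ hn0]
        field_simp
    have h' : HasSum (LSeries.term (fun n ↦ ((ArithmeticFunction.zeta n : ℕ) : ℂ)) (w - α))
        (riemannZeta (w - α)) := h
    show HasSum (LSeries.term g w) (riemannZeta (w - α))
    exact funext he ▸ h'
  have h3 := h1.convolution h2
  have key : ∀ m : ℕ, LSeries.term (LSeries.convolution (fun n ↦ ((ArithmeticFunction.zeta n : ℕ) : ℂ)) g) w m
      = sigmaC α m / (m : ℂ) ^ w := by
    intro m
    rcases eq_or_ne m 0 with rfl | hm
    · simp [LSeries.term, sigmaC]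
    · rw [LSeries.term_of_ne_zero hm]
      congr 1
      rw [congrFun (LSeries.convolution_def (fun n ↦ ((ArithmeticFunction.zeta n : ℕ) : ℂ)) g) m]
      rw [show (∑ p ∈ m.divisorsAntidiagonal, ((ArithmeticFunction.zeta p.1 : ℕ) : ℂ) * g p.2)
          = ∑ i ∈ m.divisors, ((ArithmeticFunction.zeta (m / i) : ℕ) : ℂ) * g i from
        Nat.sum_divisorsAntidiagonal' (f := fun a b ↦ ((ArithmeticFunction.zeta a : ℕ) : ℂ) * g b)]
      refine Finset.sum_congr rfl fun d hd ↦ ?_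
      have hd1 := Nat.pos_of_mem_divisors hd
      have hd2 : m / d ≠ 0 := by
        have := Nat.div_pos (Nat.le_of_dvd (Nat.pos_of_ne_zero hm) (Nat.dvd_of_mem_divisors hd)) hd1
        omega
      simp [hg, hd1.ne', hd2, ArithmeticFunction.zeta_apply]
  rw [LSeriesHasSum, funext key] at h3
  have h4 := (hasSum_nat_add_iff' 1).mpr h3
  simpa [sigmaC] using h4

lemma summable_norm_sigmaC (α : ℂ) {r : ℝ} (hr : 1 < r) (hra : 1 < r - α.re) :
    Summable fun n : ℕ ↦ ‖sigmaC α (n + 1)‖ / ((n + 1 : ℕ) : ℝ) ^ r := by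
  have hwre : 1 < ((r : ℂ)).re := by simpa using hr
  have hwre2 : 1 < ((r : ℂ) - (α.re : ℂ)).re := by simpa using hra
  have hD := (hasSum_sigmaC (α := (α.re : ℂ)) hwre hwre2).summable
  have hreal : Summable fun n : ℕ ↦
      (∑ d ∈ (n + 1).divisors, (d : ℝ) ^ α.re) / ((n + 1 : ℕ) : ℝ) ^ r := by
    rw [← Complex.summable_ofReal]
    refine hD.congr fun n ↦ ?_
    have h1 : sigmaC ((α.re : ℝ) : ℂ) (n + 1)
        = ((∑ d ∈ (n + 1).divisors, (d : ℝ) ^ α.re : ℝ) : ℂ) := by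
      unfold sigmaC
      rw [Complex.ofReal_sum]
      refine Finset.sum_congr rfl fun d hd ↦ ?_
      have hd0 : 0 < d := Nat.pos_of_mem_divisors hd
      rw [Complex.ofReal_cpow (by positivity), Complex.ofReal_natCast]
    have h2 : ((((n + 1 : ℕ) : ℝ) ^ r : ℝ) : ℂ) = ((n + 1 : ℕ) : ℂ) ^ (r : ℂ) := by
      rw [Complex.ofReal_cpow (by positivity), Complex.ofReal_natCast]
    rw [Complex.ofReal_div, ← h1, h2]
  refine Summable.of_nonneg_of_le (fun n ↦ by positivity) (fun n ↦ ?_) hreal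
  gcongr
  unfold sigmaC
  refine (norm_sum_le _ _).trans ?_
  refine Finset.sum_le_sum fun d hd ↦ ?_
  have hd0 : 0 < d := Nat.pos_of_mem_divisors hd
  rw [Complex.norm_natCast_cpow_of_pos hd0]

lemma norm_Gamma_le {s : ℂ} (hs : 0 < s.re) : ‖Complex.Gamma s‖ ≤ Real.Gamma s.re := by
  rw [Complex.Gamma_eq_integral hs, Real.Gamma_eq_integral hs, Complex.GammaIntegral]
  refine (norm_integral_le_integral_norm _).trans ?_
  refine le_of_eq (MeasureTheory.setIntegral_congr_fun measurableSet_Ioi fun t ht ↦ ?_)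
  have ht' : (0:ℝ) < t := ht
  rw [norm_mul, Complex.norm_real,
    Complex.norm_cpow_eq_rpow_re_of_pos ht']
  simp [_root_.abs_of_nonneg (Real.exp_nonneg _), Complex.sub_re]

lemma integrable_Gamma_vert {c : ℝ} (hc : 0 < c) :
    Integrable fun t : ℝ ↦ Complex.Gamma ((c : ℂ) + (t : ℂ) * Complex.I) := by
  have hcont : Continuous fun t : ℝ ↦ Complex.Gamma ((c : ℂ) + (t : ℂ) * Complex.I) := by
    refine continuous_iff_continuousAt.mpr fun t ↦ ?_
    have hdiff : DifferentiableAt ℂ Complex.Gamma ((c : ℂ) + (t : ℂ) * Complex.I) := by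
      refine Complex.differentiableAt_Gamma _ fun m ↦ fun h ↦ ?_
      have h' := congrArg Complex.re h
      simp at h'
      have hm : (0:ℝ) ≤ (m : ℝ) := Nat.cast_nonneg m
      linarith
    exact ContinuousAt.comp (f := fun t : ℝ ↦ (c : ℂ) + (t : ℂ) * Complex.I) (x := t)
      hdiff.continuousAt (by fun_prop)
  refine ((integrable_inv_one_add_sq).const_mul (Real.Gamma c + Real.Gamma (c + 2))).mono'
    hcont.aestronglyMeasurable (Filter.Eventually.of_forall fun t ↦ ?_)
  set s : ℂ := (c : ℂ) + (t : ℂ) * Complex.I with hsdef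
  have hre : s.re = c := by simp [hsdef]
  have him : s.im = t := by simp [hsdef]
  have hs0 : s ≠ 0 := by intro h; rw [h] at hre; simp at hre; exact hc.ne' hre.symm
  have hs1 : s + 1 ≠ 0 := by
    intro h
    have := congrArg Complex.re h
    simp [hre] at this
    linarith
  have hΓ2 : Complex.Gamma (s + 2) = s * (s + 1) * Complex.Gamma s := by
    have e1 := Complex.Gamma_add_one s hs0
    have e2 := Complex.Gamma_add_one (s + 1) hs1
    rw [show s + 2 = s + 1 + 1 by ring, e2, e1]; ring
  have hb1 : ‖Complex.Gamma s‖ ≤ Real.Gamma c := by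
    have := norm_Gamma_le (s := s) (by rw [hre]; exact hc)
    rwa [hre] at this
  have hb2 : ‖Complex.Gamma (s + 2)‖ ≤ Real.Gamma (c + 2) := by
    have hre2 : (s + 2).re = c + 2 := by simp [hre]
    have := norm_Gamma_le (s := s + 2) (by rw [hre2]; positivity)
    rwa [hre2] at this
  have h1 : |t| ≤ ‖s‖ := by
    have := Complex.abs_im_le_norm s
    rwa [him] at this
  have h2 : |t| ≤ ‖s + 1‖ := by
    have := Complex.abs_im_le_norm (s + 1)
    simp only [Complex.add_im, Complex.one_im, add_zero, him] at this
    exact this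
  have ht2 : t ^ 2 * ‖Complex.Gamma s‖ ≤ ‖Complex.Gamma (s + 2)‖ := by
    rw [hΓ2, norm_mul, norm_mul]
    have hts : t ^ 2 ≤ ‖s‖ * ‖s + 1‖ := by
      have := mul_le_mul h1 h2 (abs_nonneg t) (norm_nonneg s)
      rw [abs_mul_abs_self] at this; nlinarith [this]
    exact mul_le_mul_of_nonneg_right hts (norm_nonneg _)
  have hden : (0:ℝ) < 1 + t ^ 2 := by positivity
  rw [show (Real.Gamma c + Real.Gamma (c + 2)) * (1 + t ^ 2)⁻¹
      = (Real.Gamma c + Real.Gamma (c + 2)) / (1 + t ^ 2) from (div_eq_mul_inv _ _).symm,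
    le_div_iff₀ hden]
  nlinarith [ht2.trans hb2, hb1, norm_nonneg (Complex.Gamma s)]

lemma cahen_mellin {c y : ℝ} (hc : 0 < c) (hy : 0 < y) :
    ∫ t : ℝ, Complex.Gamma ((c : ℂ) + (t : ℂ) * Complex.I)
      * (y : ℂ) ^ (-((c : ℂ) + (t : ℂ) * Complex.I)) = 2 * π * Real.exp (-y) := by
  have hre : ∀ t : ℝ, ((c : ℂ) + (t : ℂ) * Complex.I).re = c := fun t ↦ by simp
  have hmel : ∀ t : ℝ, mellin (fun u : ℝ ↦ (Real.exp (-u) : ℂ)) ((c : ℂ) + (t : ℂ) * Complex.I)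
      = Complex.Gamma ((c : ℂ) + (t : ℂ) * Complex.I) := by
    intro t
    rw [Complex.Gamma_eq_integral (by rw [hre]; exact hc), Complex.GammaIntegral_eq_mellin]
  have hconv : MellinConvergent (fun u : ℝ ↦ (Real.exp (-u) : ℂ)) (c : ℂ) := by
    have h := Complex.GammaIntegral_convergent (s := (c : ℂ)) (by simpa using hc)
    refine h.congr_fun (fun t ht ↦ ?_) measurableSet_Ioi
    simp only [smul_eq_mul]
    ring
  have hvert : Complex.VerticalIntegrable (mellin fun u : ℝ ↦ (Real.exp (-u) : ℂ)) c := by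
    exact (integrable_Gamma_vert hc).congr
      (Filter.Eventually.of_forall fun t ↦ (hmel t).symm)
  have hcont : ContinuousAt (fun u : ℝ ↦ (Real.exp (-u) : ℂ)) y := by fun_prop
  have key := mellinInv_mellin_eq c (fun u : ℝ ↦ (Real.exp (-u) : ℂ)) hy hconv hvert hcont
  rw [mellinInv] at key
  set J := ∫ t : ℝ, Complex.Gamma ((c : ℂ) + (t : ℂ) * Complex.I)
      * (y : ℂ) ^ (-((c : ℂ) + (t : ℂ) * Complex.I)) with hJ
  rw [show (∫ t : ℝ, (y : ℂ) ^ (-((c : ℂ) + (t : ℂ) * Complex.I)) •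
        mellin (fun u : ℝ ↦ (Real.exp (-u) : ℂ)) ((c : ℂ) + (t : ℂ) * Complex.I))
      = ∫ t : ℝ, Complex.Gamma ((c : ℂ) + (t : ℂ) * Complex.I)
        * (y : ℂ) ^ (-((c : ℂ) + (t : ℂ) * Complex.I)) from
    integral_congr_ae (Filter.Eventually.of_forall fun t ↦ by
      simp only [hmel t, smul_eq_mul]; ring)] at key
  rw [Complex.real_smul] at key
  rw [show ((1 / (2 * π) : ℝ) : ℂ) = (2 * (π : ℂ))⁻¹ by push_cast; ring] at key
  have h2π : (2 * (π : ℂ)) ≠ 0 := by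
    simp [Real.pi_ne_zero, Complex.ofReal_ne_zero]
  calc J = 2 * (π : ℂ) * ((2 * (π : ℂ))⁻¹ * J) := by
        rw [← mul_assoc, mul_inv_cancel₀ h2π, one_mul]
    _ = 2 * (π : ℂ) * Real.exp (-y) := by rw [key]

/-- Mellin–Barnes identity for `σ_α(n)`. -/
theorem mellin_barnes_sigma (α : ℂ) (x a : ℝ) (b : ℂ) (c : ℝ)
    (hx : 0 < x) (ha : 0 < a) (hc0 : 0 < c)
    (hc1 : (1 - b.re) / a < c) (hc2 : (1 - (b - α).re) / a < c) :
    (2 * (π : ℂ) * Complex.I)⁻¹ *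
      (Complex.I * ∫ t : ℝ, Complex.Gamma ((c : ℂ) + (t : ℂ) * Complex.I) *
        riemannZeta ((a : ℂ) * ((c : ℂ) + (t : ℂ) * Complex.I) + b) *
        riemannZeta ((a : ℂ) * ((c : ℂ) + (t : ℂ) * Complex.I) + b - α) *
        (x : ℂ) ^ (-((c : ℂ) + (t : ℂ) * Complex.I))) =
    ∑' n : ℕ, sigmaC α (n + 1) / ((n + 1 : ℕ) : ℂ) ^ b *
      Complex.exp (-((((n + 1 : ℕ) : ℝ) ^ a * x : ℝ) : ℂ)) := by
  have hac1 : 1 < a * c + b.re := by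
    rw [div_lt_iff₀ ha] at hc1; linarith
  have hac2 : 1 < a * c + b.re - α.re := by
    rw [div_lt_iff₀ ha, Complex.sub_re] at hc2; linarith
  -- notation
  let A : ℕ → ℂ := fun n ↦ sigmaC α (n + 1) / ((n + 1 : ℕ) : ℂ) ^ b
  let y : ℕ → ℝ := fun n ↦ ((n + 1 : ℕ) : ℝ) ^ a * x
  let G : ℕ → ℝ → ℂ := fun n t ↦ A n * (Complex.Gamma ((c : ℂ) + (t : ℂ) * Complex.I) *
    ((y n : ℝ) : ℂ) ^ (-((c : ℂ) + (t : ℂ) * Complex.I)))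
  have hmpos : ∀ n : ℕ, (0 : ℝ) < ((n + 1 : ℕ) : ℝ) := fun n ↦ by positivity
  have hm0 : ∀ n : ℕ, ((n + 1 : ℕ) : ℂ) ≠ 0 := fun n ↦
    Nat.cast_ne_zero.mpr (Nat.succ_ne_zero n)
  have hypos : ∀ n, 0 < y n := fun n ↦ by positivity
  have hre : ∀ t : ℝ, ((c : ℂ) + (t : ℂ) * Complex.I).re = c := fun t ↦ by simp
  -- pointwise HasSum
  have hps : ∀ t : ℝ, HasSum (fun n ↦ G n t)
      (Complex.Gamma ((c : ℂ) + (t : ℂ) * Complex.I) *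
        riemannZeta ((a : ℂ) * ((c : ℂ) + (t : ℂ) * Complex.I) + b) *
        riemannZeta ((a : ℂ) * ((c : ℂ) + (t : ℂ) * Complex.I) + b - α) *
        (x : ℂ) ^ (-((c : ℂ) + (t : ℂ) * Complex.I))) := by
    intro t
    set s : ℂ := (c : ℂ) + (t : ℂ) * Complex.I with hs
    have hwre : ((a : ℂ) * s + b).re = a * c + b.re := by
      rw [Complex.add_re, Complex.re_ofReal_mul, hre t]
    have hw1 : 1 < ((a : ℂ) * s + b).re := by rw [hwre]; exact hac1
    have hw2 : 1 < ((a : ℂ) * s + b - α).re := by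
      rw [Complex.sub_re, hwre]; exact hac2
    have h := (hasSum_sigmaC hw1 hw2).mul_left (Complex.Gamma s * (x : ℂ) ^ (-s))
    have hterm : (fun n : ℕ ↦ Complex.Gamma s * (x : ℂ) ^ (-s) *
        (sigmaC α (n + 1) / ((n + 1 : ℕ) : ℂ) ^ ((a : ℂ) * s + b))) = fun n ↦ G n t := by
      funext n
      have e1 : ((y n : ℝ) : ℂ) ^ (-s)
          = ((n + 1 : ℕ) : ℂ) ^ (-((a : ℂ) * s)) * (x : ℂ) ^ (-s) := by
        show ((((n + 1 : ℕ) : ℝ) ^ a * x : ℝ) : ℂ) ^ (-s) = _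
        rw [Complex.ofReal_mul, mul_cpow_ofReal_nonneg (Real.rpow_nonneg (hmpos n).le a) hx.le]
        congr 1
        rw [Complex.ofReal_cpow (hmpos n).le, Complex.ofReal_natCast]
        rw [← Complex.cpow_mul]
        · rw [show (a : ℂ) * (-s) = -((a : ℂ) * s) by ring]
        · rw [← Complex.natCast_log, ← Complex.ofReal_mul]
          simp [Real.pi_pos]
        · rw [← Complex.natCast_log, ← Complex.ofReal_mul]
          simp [Real.pi_pos.le]
      have e2 : ((n + 1 : ℕ) : ℂ) ^ ((a : ℂ) * s + b)
          = ((n + 1 : ℕ) : ℂ) ^ ((a : ℂ) * s) * ((n + 1 : ℕ) : ℂ) ^ b :=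
        Complex.cpow_add _ _ (hm0 n)
      show _ = A n * (Complex.Gamma s * ((y n : ℝ) : ℂ) ^ (-s))
      rw [e1, e2, show ((n + 1 : ℕ) : ℂ) ^ (-((a : ℂ) * s))
          = (((n + 1 : ℕ) : ℂ) ^ ((a : ℂ) * s))⁻¹ from Complex.cpow_neg _ _]
      show _ = sigmaC α (n + 1) / ((n + 1 : ℕ) : ℂ) ^ b * _
      simp only [div_eq_mul_inv, mul_inv]
      ring
    rw [hterm] at h
    rw [show Complex.Gamma s * riemannZeta ((a : ℂ) * s + b) * riemannZeta ((a : ℂ) * s + b - α) *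
        (x : ℂ) ^ (-s) = Complex.Gamma s * (x : ℂ) ^ (-s) *
        (riemannZeta ((a : ℂ) * s + b) * riemannZeta ((a : ℂ) * s + b - α)) by ring]
    exact h
  -- integrability of each G n
  have hGint : ∀ n : ℕ, Integrable (fun t ↦ G n t) := by
    intro n
    refine Integrable.const_mul ?_ (A n)
    have hbd : Integrable fun t : ℝ ↦
        ((y n : ℝ) : ℂ) ^ (-((c : ℂ) + (t : ℂ) * Complex.I)) *
          Complex.Gamma ((c : ℂ) + (t : ℂ) * Complex.I) := by
      refine (integrable_Gamma_vert hc0).bdd_mul (c := (y n) ^ (-c)) ?_ (Filter.Eventually.of_forall fun t ↦ ?_)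
      · refine (Continuous.const_cpow (by fun_prop) ?_).aestronglyMeasurable
        exact Or.inl (Complex.ofReal_ne_zero.mpr (hypos n).ne')
      · rw [Complex.norm_cpow_eq_rpow_re_of_pos (hypos n)]
        rw [Complex.neg_re, hre t]
    exact hbd.congr (Filter.Eventually.of_forall fun t ↦ mul_comm _ _)
  -- norms
  have hGnorm : ∀ n t, ‖G n t‖ = (‖sigmaC α (n + 1)‖ / ((n + 1 : ℕ) : ℝ) ^ (a * c + b.re)
      * x ^ (-c)) * ‖Complex.Gamma ((c : ℂ) + (t : ℂ) * Complex.I)‖ := by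
    intro n t
    have h1 : ‖A n‖ = ‖sigmaC α (n + 1)‖ / ((n + 1 : ℕ) : ℝ) ^ b.re := by
      rw [norm_div, Complex.norm_natCast_cpow_of_pos (Nat.succ_pos n)]
    have h2 : ‖((y n : ℝ) : ℂ) ^ (-((c : ℂ) + (t : ℂ) * Complex.I))‖ = (y n) ^ (-c) := by
      rw [Complex.norm_cpow_eq_rpow_re_of_pos (hypos n),
        Complex.neg_re, hre t]
    have h3 : (y n) ^ (-c) = (((n + 1 : ℕ) : ℝ) ^ (a * c))⁻¹ * x ^ (-c) := by
      show (((n + 1 : ℕ) : ℝ) ^ a * x) ^ (-c) = _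
      rw [Real.mul_rpow (Real.rpow_nonneg (hmpos n).le a) hx.le,
        ← Real.rpow_mul (hmpos n).le, show a * (-c) = -(a * c) by ring,
        Real.rpow_neg (hmpos n).le]
    have hne3 : ((n + 1 : ℕ) : ℝ) ^ (a * c) ≠ 0 := by positivity
    have hne4 : ((n + 1 : ℕ) : ℝ) ^ b.re ≠ 0 := by positivity
    show ‖A n * (Complex.Gamma ((c : ℂ) + (t : ℂ) * Complex.I) *
      ((y n : ℝ) : ℂ) ^ (-((c : ℂ) + (t : ℂ) * Complex.I)))‖ = _
    rw [norm_mul, norm_mul, h1, h2, h3, Real.rpow_add (hmpos n)]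
    field_simp
  -- summability of integrals of norms
  have hsumnorm : Summable fun n : ℕ ↦ ∫ t : ℝ, ‖G n t‖ := by
    have hIeq : ∀ n : ℕ, (∫ t : ℝ, ‖G n t‖)
        = (‖sigmaC α (n + 1)‖ / ((n + 1 : ℕ) : ℝ) ^ (a * c + b.re) * x ^ (-c))
          * ∫ t : ℝ, ‖Complex.Gamma ((c : ℂ) + (t : ℂ) * Complex.I)‖ := by
      intro n
      rw [← integral_const_mul]
      exact integral_congr_ae (Filter.Eventually.of_forall fun t ↦ hGnorm n t)
    have hra' : 1 < (a * c + b.re) - α.re := by linarith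
    have hbase := ((summable_norm_sigmaC α hac1 hra').mul_right (x ^ (-c))).mul_right
      (∫ t : ℝ, ‖Complex.Gamma ((c : ℂ) + (t : ℂ) * Complex.I)‖)
    exact hbase.congr fun n ↦ (hIeq n).symm
  -- evaluate each integral
  have eval : ∀ n : ℕ, (∫ t : ℝ, G n t) = A n * (2 * (π : ℂ) * Real.exp (-(y n))) := by
    intro n
    show (∫ t : ℝ, A n * (Complex.Gamma ((c : ℂ) + (t : ℂ) * Complex.I) *
      ((y n : ℝ) : ℂ) ^ (-((c : ℂ) + (t : ℂ) * Complex.I)))) = _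
    rw [integral_const_mul, cahen_mellin hc0 (hypos n)]
  -- assemble
  have step0 : ∀ Z : ℂ, (2 * (π : ℂ) * Complex.I)⁻¹ * (Complex.I * Z)
      = (2 * (π : ℂ))⁻¹ * Z := by
    intro Z
    rw [mul_inv, mul_assoc, ← mul_assoc Complex.I⁻¹, inv_mul_cancel₀ Complex.I_ne_zero, one_mul]
  rw [step0]
  have hint_eq : (∫ t : ℝ, Complex.Gamma ((c : ℂ) + (t : ℂ) * Complex.I) *
        riemannZeta ((a : ℂ) * ((c : ℂ) + (t : ℂ) * Complex.I) + b) *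
        riemannZeta ((a : ℂ) * ((c : ℂ) + (t : ℂ) * Complex.I) + b - α) *
        (x : ℂ) ^ (-((c : ℂ) + (t : ℂ) * Complex.I)))
      = ∑' n : ℕ, ∫ t : ℝ, G n t := by
    rw [integral_tsum_of_summable_integral_norm hGint hsumnorm]
    exact integral_congr_ae (Filter.Eventually.of_forall fun t ↦ ((hps t).tsum_eq).symm)
  rw [hint_eq, tsum_congr eval, ← tsum_mul_left]
  refine tsum_congr fun n ↦ ?_
  have h2π : (2 * (π : ℂ)) ≠ 0 := by simp [Real.pi_ne_zero]
  show (2 * (π : ℂ))⁻¹ * (A n * (2 * (π : ℂ) * Real.exp (-(y n))))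
      = A n * Complex.exp (-((y n : ℝ) : ℂ))
  rw [show Complex.exp (-((y n : ℝ) : ℂ)) = ((Real.exp (-(y n)) : ℝ) : ℂ) by
    rw [Complex.ofReal_exp, Complex.ofReal_neg]]
  rw [show (2 * (π : ℂ))⁻¹ * (A n * (2 * (π : ℂ) * ((Real.exp (-(y n)) : ℝ) : ℂ)))
      = ((2 * (π : ℂ))⁻¹ * (2 * (π : ℂ))) * (A n * ((Real.exp (-(y n)) : ℝ) : ℂ)) by ring,
    inv_mul_cancel₀ h2π, one_mul]
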